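/- Let X_⋆ be a symmetric PSD rank-r matrix with column space spanned by orthonormal V_⋆ ∈ R^{d×r} and orthogonal complement spanned by V_⊥. Let U, W ∈ R^{d×r}. Assume ‖UU^T − X_⋆‖ ≤ σ_min(X_⋆)/1600 and ‖UU^T − WW^T‖_F ≤ (√(3(√2−1))/40) σ_min(X_⋆). Then ‖V_⊥^T (UU^T − WW^T) V_⊥‖_F ≤ (3/5) ‖V_⋆^T (UU^T − WW^T)‖_F, and consequently ‖UU^T − WW^T‖_F ≤ 3 ‖V_⋆^T (UU^T − WW^T)‖_F. -/

import Mathlib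

open scoped BigOperators
open Matrix

noncomputable def frobNorm {d₁ d₂ : ℕ} (A : Matrix (Fin d₁) (Fin d₂) ℝ) : ℝ :=
  Real.sqrt (∑ i, ∑ j, A i j ^ 2)

noncomputable def vecNorm {m : ℕ} (y : Fin m → ℝ) : ℝ :=
  Real.sqrt (∑ i, y i ^ 2)

noncomputable def specNorm {d₁ d₂ : ℕ} (A : Matrix (Fin d₁) (Fin d₂) ℝ) : ℝ :=
  ‖LinearMap.toContinuousLinearMap (Matrix.toEuclideanLin A)‖

noncomputable def tinner {d : ℕ} (A B : Matrix (Fin d) (Fin d) ℝ) : ℝ :=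
  (A * Bᵀ).trace

noncomputable def sigmaMin {d₁ d₂ : ℕ} (A : Matrix (Fin d₁) (Fin d₂) ℝ) : ℝ :=
  sInf {s : ℝ | 0 < s ∧ ∃ i, s ^ 2 = (show (Aᵀ * A).IsHermitian by
    simpa [Matrix.conjTranspose_eq_transpose_of_trivial] using Matrix.isHermitian_conjTranspose_mul_self A).eigenvalues i}

noncomputable def projPerp {d : ℕ} (w : Fin d → ℝ) (Z : Matrix (Fin d) (Fin d) ℝ) :
    Matrix (Fin d) (Fin d) ℝ :=
  Z - tinner (Matrix.vecMulVec w w) Z • Matrix.vecMulVec w w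

namespace S7
noncomputable def ssq {p q : ℕ} (M : Matrix (Fin p) (Fin q) ℝ) : ℝ := ∑ i, ∑ j, M i j ^ 2
noncomputable def vsq {p : ℕ} (x : Fin p → ℝ) : ℝ := ∑ i, x i ^ 2

lemma ssq_nonneg {p q : ℕ} (M : Matrix (Fin p) (Fin q) ℝ) : 0 ≤ ssq M :=
  Finset.sum_nonneg fun _ _ => Finset.sum_nonneg fun _ _ => sq_nonneg _

lemma vsq_nonneg {p : ℕ} (x : Fin p → ℝ) : 0 ≤ vsq x :=
  Finset.sum_nonneg fun _ _ => sq_nonneg _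

lemma frob_eq {p q : ℕ} (M : Matrix (Fin p) (Fin q) ℝ) : frobNorm M = Real.sqrt (ssq M) := rfl

lemma frob_nonneg {p q : ℕ} (M : Matrix (Fin p) (Fin q) ℝ) : 0 ≤ frobNorm M := Real.sqrt_nonneg _

lemma frob_sq {p q : ℕ} (M : Matrix (Fin p) (Fin q) ℝ) : frobNorm M ^ 2 = ssq M := by
  rw [frob_eq, Real.sq_sqrt (ssq_nonneg M)]

lemma ssq_transpose {p q : ℕ} (M : Matrix (Fin p) (Fin q) ℝ) : ssq Mᵀ = ssq M := by
  rw [ssq, ssq, Finset.sum_comm]; rfl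

lemma frob_transpose {p q : ℕ} (M : Matrix (Fin p) (Fin q) ℝ) : frobNorm Mᵀ = frobNorm M := by
  rw [frob_eq, frob_eq, ssq_transpose]

lemma frob_neg {p q : ℕ} (M : Matrix (Fin p) (Fin q) ℝ) : frobNorm (-M) = frobNorm M := by
  rw [frob_eq, frob_eq]; congr 1; unfold ssq; simp

lemma dot_self_eq_vsq {p : ℕ} (x : Fin p → ℝ) : x ⬝ᵥ x = vsq x := by
  unfold vsq dotProduct; congr 1; ext i; ring

/-- squared Cauchy–Schwarz entrywise for matrices -/
lemma ssq_inner_le {p q : ℕ} (X Y : Matrix (Fin p) (Fin q) ℝ) :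
    ∑ i, ∑ j, X i j * Y i j ≤ Real.sqrt (ssq X) * Real.sqrt (ssq Y) := by
  have h := Real.sum_mul_le_sqrt_mul_sqrt (Finset.univ : Finset (Fin p × Fin q))
    (fun t => X t.1 t.2) (fun t => Y t.1 t.2)
  simpa [Fintype.sum_prod_type, ssq] using h

lemma frob_add {p q : ℕ} (X Y : Matrix (Fin p) (Fin q) ℝ) :
    frobNorm (X + Y) ≤ frobNorm X + frobNorm Y := by
  have key : ssq (X + Y) ≤ (frobNorm X + frobNorm Y) ^ 2 := by
    have hXY := ssq_inner_le X Y
    have : ssq (X + Y) = ssq X + 2 * (∑ i, ∑ j, X i j * Y i j) + ssq Y := by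
      unfold ssq
      simp only [Matrix.add_apply, add_sq, Finset.sum_add_distrib, ← Finset.mul_sum]
      rw [Finset.mul_sum]
      congr 1
      · congr 1
        exact Finset.sum_congr rfl fun i _ => by rw [Finset.mul_sum]; exact Finset.sum_congr rfl fun j _ => by ring
    rw [this]
    have e2 : (frobNorm X + frobNorm Y) ^ 2
        = ssq X + 2 * (Real.sqrt (ssq X) * Real.sqrt (ssq Y)) + ssq Y := by
      rw [add_sq, frob_sq, frob_sq]; rw [frob_eq, frob_eq]; ring
    rw [e2]
    nlinarith [hXY]
  have h0 : 0 ≤ frobNorm X + frobNorm Y := add_nonneg (frob_nonneg _) (frob_nonneg _)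
  calc frobNorm (X + Y) = Real.sqrt (ssq (X + Y)) := rfl
    _ ≤ Real.sqrt ((frobNorm X + frobNorm Y) ^ 2) := Real.sqrt_le_sqrt key
    _ = frobNorm X + frobNorm Y := by rw [Real.sqrt_sq h0]

lemma frob_sub {p q : ℕ} (X Y : Matrix (Fin p) (Fin q) ℝ) :
    frobNorm (X - Y) ≤ frobNorm X + frobNorm Y := by
  have := frob_add X (-Y)
  rw [frob_neg] at this
  simpa [sub_eq_add_neg] using this

/-- quadratic form bounded by Frobenius norm -/
lemma quad_le_frob {p : ℕ} (M : Matrix (Fin p) (Fin p) ℝ) (x : Fin p → ℝ) :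
    x ⬝ᵥ (M *ᵥ x) ≤ frobNorm M * vsq x := by
  have h1 : x ⬝ᵥ (M *ᵥ x) = ∑ i, ∑ j, M i j * (x i * x j) := by
    unfold dotProduct Matrix.mulVec dotProduct
    congr 1; ext i; rw [Finset.mul_sum]; congr 1; ext j; ring
  have h2 := ssq_inner_le M (Matrix.of fun i j => x i * x j)
  have h3 : ssq (Matrix.of fun i j : Fin p => x i * x j) = vsq x ^ 2 := by
    unfold ssq vsq
    rw [sq, Finset.sum_mul_sum]
    congr 1; ext i; congr 1; ext j; simp [Matrix.of_apply]; ring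
  rw [h1]
  calc ∑ i, ∑ j, M i j * (x i * x j)
      ≤ Real.sqrt (ssq M) * Real.sqrt (ssq (Matrix.of fun i j : Fin p => x i * x j)) := by
        simpa using h2
    _ = frobNorm M * vsq x := by
        rw [h3, frob_eq, Real.sqrt_sq (vsq_nonneg x)]

lemma quad_ge_neg_frob {p : ℕ} (M : Matrix (Fin p) (Fin p) ℝ) (x : Fin p → ℝ) :
    -(frobNorm M * vsq x) ≤ x ⬝ᵥ (M *ᵥ x) := by
  have := quad_le_frob (-M) x
  rw [frob_neg] at this
  have hneg : x ⬝ᵥ ((-M) *ᵥ x) = -(x ⬝ᵥ (M *ᵥ x)) := by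
    simp [Matrix.neg_mulVec]
  linarith [this, hneg ▸ this]


def opb {p q : ℕ} (M : Matrix (Fin p) (Fin q) ℝ) (c : ℝ) : Prop :=
  0 ≤ c ∧ ∀ x : Fin q → ℝ, vsq (M *ᵥ x) ≤ c * vsq x

lemma dot_mulVec_flip {p q : ℕ} (M : Matrix (Fin p) (Fin q) ℝ) (x : Fin p → ℝ) (y : Fin q → ℝ) :
    x ⬝ᵥ (M *ᵥ y) = (Mᵀ *ᵥ x) ⬝ᵥ y := by
  rw [Matrix.dotProduct_mulVec, ← Matrix.mulVec_transpose]

lemma dot_CS {p : ℕ} (x y : Fin p → ℝ) :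
    x ⬝ᵥ y ≤ Real.sqrt (vsq x) * Real.sqrt (vsq y) := by
  have := Real.sum_mul_le_sqrt_mul_sqrt (Finset.univ : Finset (Fin p)) x y
  simpa [dotProduct, vsq] using this

lemma opb_transpose {p q : ℕ} {M : Matrix (Fin p) (Fin q) ℝ} {c : ℝ} (h : opb M c) :
    opb Mᵀ c := by
  refine ⟨h.1, fun x => ?_⟩
  set y := Mᵀ *ᵥ x with hy
  have h1 : vsq y = x ⬝ᵥ (M *ᵥ y) := by
    rw [dot_mulVec_flip, ← hy, dot_self_eq_vsq]
  have h2 : x ⬝ᵥ (M *ᵥ y) ≤ Real.sqrt (vsq x) * Real.sqrt (vsq (M *ᵥ y)) := dot_CS _ _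
  have h3 : Real.sqrt (vsq (M *ᵥ y)) ≤ Real.sqrt c * Real.sqrt (vsq y) := by
    rw [← Real.sqrt_mul h.1]
    exact Real.sqrt_le_sqrt (h.2 y)
  have h4 : vsq y ≤ (Real.sqrt (vsq x) * Real.sqrt c) * Real.sqrt (vsq y) := by
    calc vsq y = x ⬝ᵥ (M *ᵥ y) := h1
      _ ≤ Real.sqrt (vsq x) * Real.sqrt (vsq (M *ᵥ y)) := h2
      _ ≤ Real.sqrt (vsq x) * (Real.sqrt c * Real.sqrt (vsq y)) := by
          exact mul_le_mul_of_nonneg_left h3 (Real.sqrt_nonneg _)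
      _ = (Real.sqrt (vsq x) * Real.sqrt c) * Real.sqrt (vsq y) := by ring
  rcases eq_or_lt_of_le (vsq_nonneg y) with h0 | h0
  · rw [← h0]; exact mul_nonneg h.1 (vsq_nonneg x)
  · have hs : 0 < Real.sqrt (vsq y) := Real.sqrt_pos.mpr h0
    have h5 : Real.sqrt (vsq y) ≤ Real.sqrt (vsq x) * Real.sqrt c := by
      have h4' : Real.sqrt (vsq y) * Real.sqrt (vsq y)
          ≤ (Real.sqrt (vsq x) * Real.sqrt c) * Real.sqrt (vsq y) := by
        rw [Real.mul_self_sqrt (vsq_nonneg y)]; exact h4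
      exact le_of_mul_le_mul_right h4' hs
    have h6 : vsq y ≤ (Real.sqrt (vsq x) * Real.sqrt c) ^ 2 := by
      rw [← Real.sq_sqrt (vsq_nonneg y)]
      exact pow_le_pow_left₀ hs.le h5 2
    calc vsq y ≤ (Real.sqrt (vsq x) * Real.sqrt c) ^ 2 := h6
      _ = c * vsq x := by
          rw [mul_pow, Real.sq_sqrt (vsq_nonneg x), Real.sq_sqrt h.1]; ring

lemma opb_mul {p q s : ℕ} {M : Matrix (Fin p) (Fin q) ℝ} {N : Matrix (Fin q) (Fin s) ℝ}
    {c e : ℝ} (hM : opb M c) (hN : opb N e) : opb (M * N) (c * e) := by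
  refine ⟨mul_nonneg hM.1 hN.1, fun x => ?_⟩
  rw [← Matrix.mulVec_mulVec]
  calc vsq (M *ᵥ (N *ᵥ x)) ≤ c * vsq (N *ᵥ x) := hM.2 _
    _ ≤ c * (e * vsq x) := mul_le_mul_of_nonneg_left (hN.2 x) hM.1
    _ = c * e * vsq x := by ring


lemma mulVec_col {p q s : ℕ} (M : Matrix (Fin p) (Fin q) ℝ) (Y : Matrix (Fin q) (Fin s) ℝ)
    (i : Fin p) (j : Fin s) : (M * Y) i j = (M *ᵥ (fun k => Y k j)) i := by
  simp [Matrix.mul_apply, Matrix.mulVec, dotProduct]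

lemma ssq_left_mul {p q s : ℕ} {M : Matrix (Fin p) (Fin q) ℝ} {c : ℝ} (h : opb M c)
    (Y : Matrix (Fin q) (Fin s) ℝ) : ssq (M * Y) ≤ c * ssq Y := by
  have h1 : ssq (M * Y) = ∑ j, vsq (M *ᵥ (fun k => Y k j)) := by
    unfold ssq vsq
    rw [Finset.sum_comm]
    exact Finset.sum_congr rfl fun j _ => Finset.sum_congr rfl fun i _ => by
      rw [mulVec_col]
  have h2 : ssq Y = ∑ j, vsq (fun k => Y k j) := by
    unfold ssq vsq; rw [Finset.sum_comm]
  rw [h1, h2, Finset.mul_sum]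
  exact Finset.sum_le_sum fun j _ => h.2 _

lemma frob_left_mul {p q s : ℕ} {M : Matrix (Fin p) (Fin q) ℝ} {c : ℝ} (h : opb M c)
    (Y : Matrix (Fin q) (Fin s) ℝ) : frobNorm (M * Y) ≤ Real.sqrt c * frobNorm Y := by
  rw [frob_eq, frob_eq, ← Real.sqrt_mul h.1]
  exact Real.sqrt_le_sqrt (ssq_left_mul h Y)

lemma frob_right_mul {p q s : ℕ} {M : Matrix (Fin q) (Fin s) ℝ} {c : ℝ} (h : opb Mᵀ c)
    (Y : Matrix (Fin p) (Fin q) ℝ) : frobNorm (Y * M) ≤ Real.sqrt c * frobNorm Y := by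
  rw [← frob_transpose (Y * M), Matrix.transpose_mul, ← frob_transpose Y]
  exact frob_left_mul h Yᵀ

lemma vsq_pos_of_ne {p : ℕ} {x : Fin p → ℝ} (hx : x ≠ 0) : 0 < vsq x := by
  rcases eq_or_lt_of_le (vsq_nonneg x) with h0 | h0
  · exfalso; apply hx
    ext i
    have : ∀ j ∈ Finset.univ, (0:ℝ) ≤ x j ^ 2 := fun j _ => sq_nonneg _
    have hz := (Finset.sum_eq_zero_iff_of_nonneg this).mp h0.symm i (Finset.mem_univ i)
    exact pow_eq_zero_iff (by norm_num) |>.mp hz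
  · exact h0

/-- from a lower bound on `vsq (Mᵀ *ᵥ x)` we get invertibility and a bound on the inverse -/
lemma det_isUnit_of_lower {p : ℕ} {M : Matrix (Fin p) (Fin p) ℝ} {s : ℝ} (hs : 0 < s)
    (h : ∀ x, s * vsq x ≤ vsq (Mᵀ *ᵥ x)) : IsUnit M.det := by
  have hpd : (M * Mᵀ).PosDef := by
    refine Matrix.posDef_iff_dotProduct_mulVec.mpr ⟨?_, ?_⟩
    · unfold Matrix.IsHermitian
      rw [conjTranspose_eq_transpose_of_trivial, Matrix.transpose_mul, Matrix.transpose_transpose]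
    · intro x hx
      have hq : (star x) ⬝ᵥ ((M * Mᵀ) *ᵥ x) = vsq (Mᵀ *ᵥ x) := by
        rw [star_trivial, ← Matrix.mulVec_mulVec, dot_mulVec_flip, dot_self_eq_vsq]
      rw [hq]
      calc (0:ℝ) < s * vsq x := mul_pos hs (vsq_pos_of_ne hx) 
        _ ≤ vsq (Mᵀ *ᵥ x) := h x
  have hdet : (0:ℝ) < (M * Mᵀ).det := hpd.det_pos
  rw [Matrix.det_mul, Matrix.det_transpose] at hdet
  exact isUnit_iff_ne_zero.mpr fun h0 => by rw [h0] at hdet; simp at hdet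
  
lemma opb_inv_of_lower {p : ℕ} {M : Matrix (Fin p) (Fin p) ℝ} {s : ℝ} (hs : 0 < s)
    (h : ∀ x, s * vsq x ≤ vsq (Mᵀ *ᵥ x)) : opb M⁻¹ (1 / s) := by
  have hdet := det_isUnit_of_lower hs h
  have hdetT : IsUnit Mᵀ.det := by rwa [Matrix.det_transpose]
  have h1 : opb (Mᵀ)⁻¹ (1 / s) := by
    refine ⟨by positivity, fun z => ?_⟩
    have := h ((Mᵀ)⁻¹ *ᵥ z)
    rw [Matrix.mulVec_mulVec, Matrix.mul_nonsing_inv _ hdetT, Matrix.one_mulVec] at this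
    rw [div_mul_eq_mul_div, one_mul, le_div_iff₀ hs, mul_comm]
    exact this
  have h2 := opb_transpose h1
  rwa [← Matrix.transpose_nonsing_inv, Matrix.transpose_transpose] at h2

lemma ssq_eq_trace {p q : ℕ} (M : Matrix (Fin p) (Fin q) ℝ) : ssq M = (M * Mᵀ).trace := by
  unfold ssq Matrix.trace
  rw [Finset.sum_congr rfl fun i (_ : i ∈ Finset.univ) => ?_]
  simp [Matrix.diag, Matrix.mul_apply, pow_two]

/-- Pythagoras, left version -/
lemma ssq_split_left {dd r₁ r₂ p : ℕ} {V₁ : Matrix (Fin dd) (Fin r₁) ℝ}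
    {V₂ : Matrix (Fin dd) (Fin r₂) ℝ} (hC : V₁ * V₁ᵀ + V₂ * V₂ᵀ = 1)
    (Z : Matrix (Fin dd) (Fin p) ℝ) :
    ssq Z = ssq (V₁ᵀ * Z) + ssq (V₂ᵀ * Z) := by
  have h1 : ∀ {rr : ℕ} (V : Matrix (Fin dd) (Fin rr) ℝ),
      ssq (Vᵀ * Z) = (Zᵀ * ((V * Vᵀ) * Z)).trace := by
    intro rr V
    rw [← ssq_transpose, Matrix.transpose_mul, Matrix.transpose_transpose, ssq_eq_trace,
      Matrix.transpose_mul, Matrix.transpose_transpose]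
    simp only [Matrix.mul_assoc]
  have h2 : ssq Z = (Zᵀ * Z).trace := by
    rw [← ssq_transpose, ssq_eq_trace, Matrix.transpose_transpose]
  rw [h1 V₁, h1 V₂, ← Matrix.trace_add, ← Matrix.mul_add, ← Matrix.add_mul, hC,
    Matrix.one_mul, h2]

/-- Pythagoras, right version -/
lemma ssq_split_right {dd r₁ r₂ p : ℕ} {V₁ : Matrix (Fin dd) (Fin r₁) ℝ}
    {V₂ : Matrix (Fin dd) (Fin r₂) ℝ} (hC : V₁ * V₁ᵀ + V₂ * V₂ᵀ = 1)
    (Z : Matrix (Fin p) (Fin dd) ℝ) :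
    ssq Z = ssq (Z * V₁) + ssq (Z * V₂) := by
  have := ssq_split_left hC Zᵀ
  rw [ssq_transpose] at this
  rw [this, ← ssq_transpose (Z * V₁), ← ssq_transpose (Z * V₂), Matrix.transpose_mul,
    Matrix.transpose_mul]

/-- quadratic form bounded by the spectral norm -/
lemma quad_le_spec {dd : ℕ} (M : Matrix (Fin dd) (Fin dd) ℝ) (y : Fin dd → ℝ) :
    |y ⬝ᵥ (M *ᵥ y)| ≤ specNorm M * vsq y := by
  set L := LinearMap.toContinuousLinearMap (Matrix.toEuclideanLin M) with hL
  set y' : EuclideanSpace ℝ (Fin dd) := (WithLp.equiv 2 (Fin dd → ℝ)).symm y with hy'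
  have happ : L y' = (WithLp.equiv 2 (Fin dd → ℝ)).symm (M *ᵥ y) := by
    rw [hL]
    show Matrix.toEuclideanLin M y' = _
    rfl
  have hinner : @inner ℝ _ _ y' (L y') = y ⬝ᵥ (M *ᵥ y) := by
    rw [happ]
    simp [PiLp.inner_apply, hy', dotProduct, RCLike.inner_apply]
    exact Finset.sum_congr rfl fun i _ => mul_comm _ _
  have hnorm : ‖y'‖ ^ 2 = vsq y := by
    rw [EuclideanSpace.norm_eq, Real.sq_sqrt (by positivity)]
    unfold vsq
    exact Finset.sum_congr rfl fun i _ => by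
      rw [Real.norm_eq_abs, sq_abs]; rfl
  calc |y ⬝ᵥ (M *ᵥ y)| = |@inner ℝ _ _ y' (L y')| := by rw [hinner]
    _ ≤ ‖y'‖ * ‖L y'‖ := abs_real_inner_le_norm _ _
    _ ≤ ‖y'‖ * (‖L‖ * ‖y'‖) := by
        exact mul_le_mul_of_nonneg_left (L.le_opNorm y') (norm_nonneg _)
    _ = ‖L‖ * ‖y'‖ ^ 2 := by ring
    _ = specNorm M * vsq y := by rw [hnorm]; rfl

lemma sandwich_mul {p : ℕ} {V : Matrix (Fin p) (Fin p) ℝ} (hVV' : star V * V = 1)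
    (A B : Matrix (Fin p) (Fin p) ℝ) :
    (V * A * star V) * (V * B * star V) = V * (A * B) * star V := by
  calc (V * A * star V) * (V * B * star V)
      = V * (A * ((star V * V) * (B * star V))) := by simp only [Matrix.mul_assoc]
    _ = V * (A * B) * star V := by rw [hVV', Matrix.one_mul]; simp only [Matrix.mul_assoc]

lemma completeness {dd rr : ℕ} (hrd : rr ≤ dd) (Vs : Matrix (Fin dd) (Fin rr) ℝ)
    (Vp : Matrix (Fin dd) (Fin (dd - rr)) ℝ) (hVs : Vsᵀ * Vs = 1) (hVp : Vpᵀ * Vp = 1)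
    (hVsVp : Vsᵀ * Vp = 0) : Vs * Vsᵀ + Vp * Vpᵀ = 1 := by
  have e : Fin dd ≃ Fin rr ⊕ Fin (dd - rr) :=
    ((finCongr (Nat.add_sub_cancel' hrd)).symm).trans finSumFinEquiv.symm
  have hPs : Vpᵀ * Vs = 0 := by
    have h := congrArg Matrix.transpose hVsVp
    rw [Matrix.transpose_mul, Matrix.transpose_transpose] at h
    simpa using h
  have hrows : Matrix.fromRows Vsᵀ Vpᵀ * Matrix.fromCols Vs Vp = 1 := by
    rw [Matrix.fromRows_mul_fromCols, hVs, hVp, hVsVp, hPs, Matrix.fromBlocks_one]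
  have hcols := (Matrix.fromCols_mul_fromRows_eq_one_comm e Vs Vp Vsᵀ Vpᵀ).mpr hrows
  rw [Matrix.fromCols_mul_fromRows] at hcols
  exact hcols

lemma eig_exists {p : ℕ} {M : Matrix (Fin p) (Fin p) ℝ} (hM : M.IsHermitian) {t : ℝ}
    {v : Fin p → ℝ} (hv : v ≠ 0) (heq : M *ᵥ v = t • v) : ∃ i, hM.eigenvalues i = t := by
  set V : Matrix (Fin p) (Fin p) ℝ := (hM.eigenvectorUnitary : Matrix (Fin p) (Fin p) ℝ) with hVdef
  have hVV : V * star V = 1 := Matrix.mem_unitaryGroup_iff.mp hM.eigenvectorUnitary.2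
  have hVV' : star V * V = 1 := Matrix.mem_unitaryGroup_iff'.mp hM.eigenvectorUnitary.2
  set w := star V *ᵥ v with hw
  have hwne : w ≠ 0 := by
    intro h0
    apply hv
    have hvw : V *ᵥ w = v := by rw [hw, Matrix.mulVec_mulVec, hVV, Matrix.one_mulVec]
    rw [h0, Matrix.mulVec_zero] at hvw; exact hvw.symm
  have hst := hM.spectral_theorem
  rw [RCLike.ofReal_real_eq_id, Unitary.conjStarAlgAut_apply] at hst
  have hD : Matrix.diagonal hM.eigenvalues *ᵥ w = t • w := by
    have h1 : star V *ᵥ (M *ᵥ v) = star V *ᵥ (t • v) := by rw [heq]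
    rw [Matrix.mulVec_smul, ← hw] at h1
    rw [Matrix.mulVec_mulVec] at h1
    conv_lhs at h1 => rw [hst]
    have hsimp : star V * (V * Matrix.diagonal (id ∘ hM.eigenvalues) * star V)
        = Matrix.diagonal hM.eigenvalues * star V := by
      calc star V * (V * Matrix.diagonal (id ∘ hM.eigenvalues) * star V)
          = (star V * V) * (Matrix.diagonal (id ∘ hM.eigenvalues) * star V) := by
            simp only [Matrix.mul_assoc]
        _ = Matrix.diagonal hM.eigenvalues * star V := by
            rw [hVV', Matrix.one_mul]; rfl
    rw [hsimp, ← Matrix.mulVec_mulVec, ← hw] at h1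
    exact h1
  obtain ⟨i, hi⟩ := Function.ne_iff.mp hwne
  have hcomp := congrFun hD i
  rw [Matrix.mulVec_diagonal] at hcomp
  have : hM.eigenvalues i * w i = t * w i := hcomp
  exact ⟨i, mul_right_cancel₀ hi this⟩

lemma sigma_facts {dd rr : ℕ} (Xs : Matrix (Fin dd) (Fin dd) ℝ) (hXpsd : Xs.PosSemidef)
    (hXrank : Xs.rank = rr) (hr : rr ≠ 0) :
    0 < sigmaMin Xs ∧
      (∀ y : Fin dd → ℝ, (∃ z, Xs *ᵥ z = y) →
        sigmaMin Xs * (y ⬝ᵥ y) ≤ y ⬝ᵥ (Xs *ᵥ y)) := by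
  have hH : Xs.IsHermitian := hXpsd.1
  have hXt : Xsᵀ = Xs := by
    rw [← Matrix.conjTranspose_eq_transpose_of_trivial]; exact hH
  set ev := hH.eigenvalues with hev
  have hHT : (Xsᵀ * Xs).IsHermitian := by
    simpa [Matrix.conjTranspose_eq_transpose_of_trivial] using Matrix.isHermitian_conjTranspose_mul_self Xs
  set T := {s : ℝ | 0 < s ∧ ∃ i, s ^ 2 = hHT.eigenvalues i}
    with hT
  have hσdef : sigmaMin Xs = sInf T := rfl
  have hmem : ∀ i, 0 < ev i → ev i ∈ T := by
    intro i hi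
    refine ⟨hi, ?_⟩
    have hv1 := hH.mulVec_eigenvectorBasis i
    have hvne : (⇑(hH.eigenvectorBasis i) : Fin dd → ℝ) ≠ 0 := by
      have := hH.eigenvectorBasis.orthonormal.ne_zero i
      intro h0; apply this
      ext j; exact congrFun h0 j
    have heq2 : (Xsᵀ * Xs) *ᵥ ⇑(hH.eigenvectorBasis i) = (ev i ^ 2) • ⇑(hH.eigenvectorBasis i) := by
      rw [← Matrix.mulVec_mulVec, hv1, Matrix.mulVec_smul, hXt, hv1, smul_smul, ← sq]
    obtain ⟨j, hj⟩ := eig_exists hHT hvne heq2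
    exact ⟨j, hj.symm⟩
  have hTfin : T.Finite := by
    apply Set.Finite.subset
      (Set.Finite.image Real.sqrt
        (Set.finite_range hHT.eigenvalues))
    rintro s ⟨hs, j, hj⟩
    exact ⟨hHT.eigenvalues j, Set.mem_range_self j,
      by rw [← hj, Real.sqrt_sq hs.le]⟩
  have hev_nonneg : ∀ i, 0 ≤ ev i := fun i => hXpsd.eigenvalues_nonneg i
  have hTne : T.Nonempty := by
    have hex : ∃ i, 0 < ev i := by
      by_contra hcon
      push_neg at hcon
      have hev0 : ev = 0 := funext fun i => le_antisymm (hcon i) (hev_nonneg i)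
      have hX0 : Xs = 0 := by
        have hst := hH.spectral_theorem
        rw [RCLike.ofReal_real_eq_id, Unitary.conjStarAlgAut_apply] at hst
        rw [hst]
        have : Matrix.diagonal (id ∘ ev) = 0 := by
          rw [show (id ∘ ev) = ev from rfl, hev0]
          ext i j; simp [Matrix.diagonal]
        rw [this, Matrix.mul_zero, Matrix.zero_mul]
      rw [hX0, Matrix.rank_zero] at hXrank
      exact hr hXrank.symm
    obtain ⟨i, hi⟩ := hex
    exact ⟨ev i, hmem i hi⟩
  have hbdd : BddBelow T := ⟨0, fun s hs => hs.1.le⟩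
  have hσT : sigmaMin Xs ∈ T := by rw [hσdef]; exact hTne.csInf_mem hTfin
  have hσpos : 0 < sigmaMin Xs := hσT.1
  have hσle : ∀ i, 0 < ev i → sigmaMin Xs ≤ ev i := by
    intro i hi; rw [hσdef]; exact csInf_le hbdd (hmem i hi)
  set σ := sigmaMin Xs with hσ
  refine ⟨hσpos, ?_⟩
  -- PSD of Xs³ - σ Xs²
  have hg : ∀ i, 0 ≤ ev i ^ 3 - σ * ev i ^ 2 := by
    intro i
    rcases eq_or_lt_of_le (hev_nonneg i) with h0 | h0
    · rw [← h0]; ring_nf; exact le_refl 0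
    · have := hσle i h0
      nlinarith
  have hP : (Xs * Xs * Xs - σ • (Xs * Xs)).PosSemidef := by
    set V : Matrix (Fin dd) (Fin dd) ℝ := (hH.eigenvectorUnitary : Matrix (Fin dd) (Fin dd) ℝ) with hVdef
    have hVV' : star V * V = 1 := Matrix.mem_unitaryGroup_iff'.mp hH.eigenvectorUnitary.2
    have hst := hH.spectral_theorem
    rw [RCLike.ofReal_real_eq_id, Unitary.conjStarAlgAut_apply] at hst
    have hstep : Xs = V * Matrix.diagonal ev * star V := hst
    have hdiag : ∀ f g : Fin dd → ℝ, (∀ i, f i = g i) →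
        V * Matrix.diagonal f * star V = V * Matrix.diagonal g * star V := by
      intro f g h; rw [funext h]
    have h2 : Xs * Xs = V * Matrix.diagonal (fun i => ev i ^ 2) * star V := by
      rw [hstep, sandwich_mul hVV', Matrix.diagonal_mul_diagonal]
      exact hdiag _ _ fun i => by ring
    have h3 : Xs * Xs * Xs = V * Matrix.diagonal (fun i => ev i ^ 3) * star V := by
      rw [h2, hstep, sandwich_mul hVV', Matrix.diagonal_mul_diagonal]
      exact hdiag _ _ fun i => by ring
    have h4 : σ • (Xs * Xs) = V * Matrix.diagonal (fun i => σ * ev i ^ 2) * star V := by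
      rw [h2, ← Matrix.smul_mul, ← Matrix.mul_smul, ← Matrix.diagonal_smul]
      rfl
    have h5 : Xs * Xs * Xs - σ • (Xs * Xs)
        = V * Matrix.diagonal (fun i => ev i ^ 3 - σ * ev i ^ 2) * star V := by
      rw [h3, h4, ← Matrix.diagonal_sub, Matrix.mul_sub, Matrix.sub_mul]
    rw [h5, Matrix.star_eq_conjTranspose]
    exact (Matrix.posSemidef_diagonal_iff.mpr hg).mul_mul_conjTranspose_same V
  -- quadratic form lower bound on the range
  rintro y ⟨z, rfl⟩
  have hshift : ∀ (a b : Fin dd → ℝ), (Xs *ᵥ a) ⬝ᵥ b = a ⬝ᵥ (Xs *ᵥ b) := by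
    intro a b
    rw [dot_mulVec_flip Xs a b, hXt]
  have e1 : (Xs *ᵥ z) ⬝ᵥ (Xs *ᵥ (Xs *ᵥ z)) = z ⬝ᵥ ((Xs * Xs * Xs) *ᵥ z) := by
    rw [hshift, Matrix.mulVec_mulVec, Matrix.mulVec_mulVec]
  have e2 : (Xs *ᵥ z) ⬝ᵥ (Xs *ᵥ z) = z ⬝ᵥ ((Xs * Xs) *ᵥ z) := by
    rw [hshift, Matrix.mulVec_mulVec]
  have hq := (Matrix.posSemidef_iff_dotProduct_mulVec.mp hP).2 z
  rw [star_trivial] at hq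
  have expand : z ⬝ᵥ ((Xs * Xs * Xs - σ • (Xs * Xs)) *ᵥ z)
      = z ⬝ᵥ ((Xs * Xs * Xs) *ᵥ z) - σ * (z ⬝ᵥ ((Xs * Xs) *ᵥ z)) := by
    rw [Matrix.sub_mulVec, dotProduct_sub, Matrix.smul_mulVec, dotProduct_smul]
    rfl
  rw [expand] at hq
  rw [e1, e2]
  linarith

lemma frob_zero {p q : ℕ} : frobNorm (0 : Matrix (Fin p) (Fin q) ℝ) = 0 := by
  rw [frob_eq]
  have : ssq (0 : Matrix (Fin p) (Fin q) ℝ) = 0 := by unfold ssq; simp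
  rw [this, Real.sqrt_zero]

lemma orth_iso {dd rr : ℕ} {V : Matrix (Fin dd) (Fin rr) ℝ} (h : Vᵀ * V = 1)
    (x : Fin rr → ℝ) : vsq (V *ᵥ x) = vsq x := by
  rw [← dot_self_eq_vsq (V *ᵥ x), dot_mulVec_flip, Matrix.mulVec_mulVec, h,
    Matrix.one_mulVec, dot_self_eq_vsq]

lemma orth_opb {dd rr : ℕ} {V : Matrix (Fin dd) (Fin rr) ℝ} (h : Vᵀ * V = 1) :
    opb Vᵀ 1 := by
  refine ⟨zero_le_one, fun x => ?_⟩
  set P := V * Vᵀ with hP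
  have hPP : P * P = P := by
    rw [hP, Matrix.mul_assoc, ← Matrix.mul_assoc Vᵀ V, h, Matrix.one_mul]
  have hPt : Pᵀ = P := by rw [hP, Matrix.transpose_mul, Matrix.transpose_transpose]
  have h1 : vsq (Vᵀ *ᵥ x) = x ⬝ᵥ (P *ᵥ x) := by
    rw [← dot_self_eq_vsq, ← Matrix.mulVec_mulVec, ← dot_mulVec_flip]
  have h2 : x ⬝ᵥ ((1 - P) *ᵥ x) = vsq ((1 - P) *ᵥ x) := by
    have hQt : (1 - P)ᵀ = 1 - P := by rw [Matrix.transpose_sub, Matrix.transpose_one, hPt]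
    have hQQ : (1 - P) * (1 - P) = 1 - P := by
      rw [Matrix.mul_sub, Matrix.sub_mul, Matrix.sub_mul, hPP]
      simp only [Matrix.one_mul, Matrix.mul_one]
      abel
    conv_lhs => rw [← hQQ, ← Matrix.mulVec_mulVec, dot_mulVec_flip, hQt]
    rw [dot_self_eq_vsq]
  have h3 : x ⬝ᵥ ((1 - P) *ᵥ x) = vsq x - x ⬝ᵥ (P *ᵥ x) := by
    rw [Matrix.sub_mulVec, dotProduct_sub, Matrix.one_mulVec, dot_self_eq_vsq]
  have h5 : x ⬝ᵥ (P *ᵥ x) ≤ vsq x := by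
    have h4 := vsq_nonneg ((1 - P) *ᵥ x)
    rw [← h2, h3] at h4
    linarith
  rw [h1, one_mul]
  exact h5

lemma key_id1 {n₁ n₂ : ℕ} (A B : Matrix (Fin n₂) (Fin n₁) ℝ) (C D Ci : Matrix (Fin n₁) (Fin n₁) ℝ)
    (hCi : Ci * C = 1) :
    A * Aᵀ - B * Bᵀ = A * Ci * (C * Aᵀ - D * Bᵀ) + (A * Ci * D - B) * Bᵀ := by
  have h : A * (Ci * (C * Aᵀ)) = A * Aᵀ := by
    rw [← Matrix.mul_assoc Ci C, hCi, Matrix.one_mul]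
  simp only [Matrix.mul_sub, Matrix.sub_mul, Matrix.mul_assoc, h]
  abel

lemma key_id2 {n₁ n₂ : ℕ} (A B : Matrix (Fin n₂) (Fin n₁) ℝ) (C D Ci : Matrix (Fin n₁) (Fin n₁) ℝ)
    (hCi : Ci * C = 1) :
    (A * Ci * D - B) * Dᵀ = (C * Aᵀ - D * Bᵀ)ᵀ - A * Ci * (C * Cᵀ - D * Dᵀ) := by
  have h : A * (Ci * (C * Cᵀ)) = A * Cᵀ := by
    rw [← Matrix.mul_assoc Ci C, hCi, Matrix.one_mul]
  simp only [Matrix.transpose_sub, Matrix.transpose_mul, Matrix.transpose_transpose,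
    Matrix.mul_sub, Matrix.sub_mul, Matrix.mul_assoc, h]
  abel

end S7

open S7 in
set_option maxHeartbeats 3000000 in
theorem statement7 {d r : ℕ} (hrd : r ≤ d)
    (Xs : Matrix (Fin d) (Fin d) ℝ) (hXpsd : Xs.PosSemidef) (hXrank : Xs.rank = r)
    (Vs : Matrix (Fin d) (Fin r) ℝ) (Vp : Matrix (Fin d) (Fin (d - r)) ℝ)
    (hVs : Vsᵀ * Vs = 1) (hVsX : Vs * Vsᵀ * Xs = Xs)
    (hVp : Vpᵀ * Vp = 1) (hVsVp : Vsᵀ * Vp = 0)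
    (U W : Matrix (Fin d) (Fin r) ℝ)
    (h1 : specNorm (U * Uᵀ - Xs) ≤ sigmaMin Xs / 1600)
    (h2 : frobNorm (U * Uᵀ - W * Wᵀ)
      ≤ Real.sqrt (3 * (Real.sqrt 2 - 1)) / 40 * sigmaMin Xs) :
    frobNorm (Vpᵀ * (U * Uᵀ - W * Wᵀ) * Vp)
        ≤ 3 / 5 * frobNorm (Vsᵀ * (U * Uᵀ - W * Wᵀ)) ∧
      frobNorm (U * Uᵀ - W * Wᵀ) ≤ 3 * frobNorm (Vsᵀ * (U * Uᵀ - W * Wᵀ)) := by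
  by_cases hr : r = 0
  · subst hr
    have hU0 : U * Uᵀ = 0 := by
      ext i j; simp [Matrix.mul_apply]
    have hW0 : W * Wᵀ = 0 := by
      ext i j; simp [Matrix.mul_apply]
    have e1 : Vpᵀ * (0 : Matrix (Fin d) (Fin d) ℝ) * Vp = 0 := by
      rw [Matrix.mul_zero, Matrix.zero_mul]
    have e2 : Vsᵀ * (0 : Matrix (Fin d) (Fin d) ℝ) = 0 := Matrix.mul_zero _
    rw [hU0, hW0, sub_zero, e1, e2, frob_zero, frob_zero]
    norm_num
  -- main case
  obtain ⟨hσpos, hXlow⟩ := sigma_facts Xs hXpsd hXrank hr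
  set σ := sigmaMin Xs with hσdef
  have hσne : σ ≠ 0 := ne_of_gt hσpos
  set Δ := U * Uᵀ - W * Wᵀ with hΔdef
  set m := frobNorm (Vsᵀ * Δ) with hmdef
  have hm0 : 0 ≤ m := frob_nonneg _
  have hXt : Xsᵀ = Xs := by
    rw [← Matrix.conjTranspose_eq_transpose_of_trivial]; exact hXpsd.1
  have hVpVs : Vpᵀ * Vs = 0 := by
    have h := congrArg Matrix.transpose hVsVp
    rw [Matrix.transpose_mul, Matrix.transpose_transpose] at h
    simpa using h
  have hXfac : Xs = Vs * (Vsᵀ * Xs) := by rw [← Matrix.mul_assoc, hVsX]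
  have hVpX : Vpᵀ * Xs = 0 := by
    conv_lhs => rw [hXfac]
    rw [← Matrix.mul_assoc, hVpVs, Matrix.zero_mul]
  have hXVp : Xs * Vp = 0 := by
    have h := congrArg Matrix.transpose hVpX
    rw [Matrix.transpose_mul, hXt, Matrix.transpose_transpose] at h
    simpa using h
  have hΔsym : Δᵀ = Δ := by
    rw [hΔdef, Matrix.transpose_sub, Matrix.transpose_mul, Matrix.transpose_mul,
      Matrix.transpose_transpose, Matrix.transpose_transpose]
  -- range fact
  have hrange : ∀ x : Fin r → ℝ, ∃ z, Xs *ᵥ z = Vs *ᵥ x := by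
    have hle : LinearMap.range Xs.mulVecLin ≤ LinearMap.range Vs.mulVecLin := by
      rintro y ⟨z, rfl⟩
      refine ⟨(Vsᵀ * Xs) *ᵥ z, ?_⟩
      rw [Matrix.mulVecLin_apply, Matrix.mulVecLin_apply, Matrix.mulVec_mulVec, ← hXfac]
    have hfr : Module.finrank ℝ ↥(LinearMap.range Vs.mulVecLin)
        ≤ Module.finrank ℝ ↥(LinearMap.range Xs.mulVecLin) := by
      have hx : Module.finrank ℝ ↥(LinearMap.range Xs.mulVecLin) = r := by
        rw [← hXrank]; rfl
      have hv : Module.finrank ℝ ↥(LinearMap.range Vs.mulVecLin) ≤ r := by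
        have h := Vs.mulVecLin.finrank_range_le
        simpa using h
      omega
    have heq := Submodule.eq_of_le_of_finrank_le hle hfr
    intro x
    have hx : Vs *ᵥ x ∈ LinearMap.range Vs.mulVecLin := ⟨x, rfl⟩
    rw [← heq] at hx
    obtain ⟨z, hz⟩ := hx
    exact ⟨z, hz⟩
  -- spectral quadratic bound for U*Uᵀ - Xs
  have hspec : ∀ y : Fin d → ℝ, |y ⬝ᵥ ((U * Uᵀ - Xs) *ᵥ y)| ≤ σ / 1600 * vsq y := by
    intro y
    calc |y ⬝ᵥ ((U * Uᵀ - Xs) *ᵥ y)| ≤ specNorm (U * Uᵀ - Xs) * vsq y := quad_le_spec _ y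
      _ ≤ σ / 1600 * vsq y := mul_le_mul_of_nonneg_right h1 (vsq_nonneg y)
  -- ‖Δ‖F ≤ (7/250) σ
  have hfrobΔ : frobNorm Δ ≤ 7 / 250 * σ := by
    have hs2 : Real.sqrt 2 ≤ 283 / 200 := by
      rw [show (283 / 200 : ℝ) = Real.sqrt ((283 / 200) ^ 2) from
        (Real.sqrt_sq (by norm_num)).symm]
      exact Real.sqrt_le_sqrt (by norm_num)
    have hk : Real.sqrt (3 * (Real.sqrt 2 - 1)) ≤ 28 / 25 := by
      rw [show (28 / 25 : ℝ) = Real.sqrt ((28 / 25) ^ 2) from (Real.sqrt_sq (by norm_num)).symm]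
      apply Real.sqrt_le_sqrt
      nlinarith
    calc frobNorm Δ ≤ Real.sqrt (3 * (Real.sqrt 2 - 1)) / 40 * σ := h2
      _ ≤ 28 / 25 / 40 * σ := by
          apply mul_le_mul_of_nonneg_right _ hσpos.le
          linarith
      _ = 7 / 250 * σ := by ring
  -- quadratic bounds for blocks
  have hUUq : ∀ y : Fin d → ℝ, y ⬝ᵥ ((U * Uᵀ) *ᵥ y) = vsq (Uᵀ *ᵥ y) := by
    intro y
    rw [← Matrix.mulVec_mulVec, dot_mulVec_flip, dot_self_eq_vsq]
  have hWWq : ∀ y : Fin d → ℝ, y ⬝ᵥ ((W * Wᵀ) *ᵥ y) = vsq (Wᵀ *ᵥ y) := by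
    intro y
    rw [← Matrix.mulVec_mulVec, dot_mulVec_flip, dot_self_eq_vsq]
  have hsplitU : ∀ y : Fin d → ℝ,
      y ⬝ᵥ ((U * Uᵀ) *ᵥ y) = y ⬝ᵥ ((U * Uᵀ - Xs) *ᵥ y) + y ⬝ᵥ (Xs *ᵥ y) := by
    intro y
    rw [Matrix.sub_mulVec, dotProduct_sub]; ring
  have hsplitW : ∀ y : Fin d → ℝ,
      y ⬝ᵥ ((W * Wᵀ) *ᵥ y) = y ⬝ᵥ ((U * Uᵀ) *ᵥ y) - y ⬝ᵥ (Δ *ᵥ y) := by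
    intro y
    rw [hΔdef, Matrix.sub_mulVec, dotProduct_sub]; ring
  -- opb for A = Vpᵀ U
  have hAt_op : opb (Uᵀ * Vp) (σ / 1600) := by
    refine ⟨by positivity, fun x => ?_⟩
    rw [← Matrix.mulVec_mulVec]
    set y := Vp *ᵥ x with hy
    have hXy : Xs *ᵥ y = 0 := by
      rw [hy, Matrix.mulVec_mulVec, hXVp, Matrix.zero_mulVec]
    have := hspec y
    have h0 : y ⬝ᵥ ((U * Uᵀ) *ᵥ y) = y ⬝ᵥ ((U * Uᵀ - Xs) *ᵥ y) := by
      rw [hsplitU y, hXy, dotProduct_zero, add_zero]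
    have hiso : vsq y = vsq x := orth_iso hVp x
    calc vsq (Uᵀ *ᵥ y) = y ⬝ᵥ ((U * Uᵀ) *ᵥ y) := (hUUq y).symm
      _ = y ⬝ᵥ ((U * Uᵀ - Xs) *ᵥ y) := h0
      _ ≤ σ / 1600 * vsq y := le_trans (le_abs_self _) (hspec y)
      _ = σ / 1600 * vsq x := by rw [hiso]
  have hA_op : opb (Vpᵀ * U) (σ / 1600) := by
    have h := opb_transpose hAt_op
    rwa [Matrix.transpose_mul, Matrix.transpose_transpose] at h
  -- lower bound for C = Vsᵀ U
  have hC_low : ∀ x : Fin r → ℝ, 1599 / 1600 * σ * vsq x ≤ vsq ((Vsᵀ * U)ᵀ *ᵥ x) := by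
    intro x
    rw [Matrix.transpose_mul, Matrix.transpose_transpose, ← Matrix.mulVec_mulVec]
    set y := Vs *ᵥ x with hy
    have hiso : vsq y = vsq x := orth_iso hVs x
    have hXq : σ * vsq y ≤ y ⬝ᵥ (Xs *ᵥ y) := by
      have := hXlow y (hrange x)
      rwa [dot_self_eq_vsq] at this
    have habs := hspec y
    have hlow' : -(σ / 1600 * vsq y) ≤ y ⬝ᵥ ((U * Uᵀ - Xs) *ᵥ y) := by
      have := neg_le_of_abs_le habs
      linarith
    calc 1599 / 1600 * σ * vsq x = σ * vsq y - σ / 1600 * vsq y := by rw [hiso]; ring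
      _ ≤ y ⬝ᵥ (Xs *ᵥ y) + y ⬝ᵥ ((U * Uᵀ - Xs) *ᵥ y) := by linarith
      _ = y ⬝ᵥ ((U * Uᵀ) *ᵥ y) := by rw [hsplitU y]; ring
      _ = vsq (Uᵀ *ᵥ y) := hUUq y
  -- lower bound for D = Vsᵀ W
  have hD_low : ∀ x : Fin r → ℝ, 97 / 100 * σ * vsq x ≤ vsq ((Vsᵀ * W)ᵀ *ᵥ x) := by
    intro x
    rw [Matrix.transpose_mul, Matrix.transpose_transpose, ← Matrix.mulVec_mulVec]
    set y := Vs *ᵥ x with hy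
    have hiso : vsq y = vsq x := orth_iso hVs x
    have hCx := hC_low x
    rw [Matrix.transpose_mul, Matrix.transpose_transpose, ← Matrix.mulVec_mulVec, ← hy] at hCx
    have hΔq : y ⬝ᵥ (Δ *ᵥ y) ≤ frobNorm Δ * vsq y := quad_le_frob Δ y
    have hΔq2 : y ⬝ᵥ (Δ *ᵥ y) ≤ 7 / 250 * σ * vsq y :=
      hΔq.trans (mul_le_mul_of_nonneg_right hfrobΔ (vsq_nonneg y))
    calc 97 / 100 * σ * vsq x
        = 1599 / 1600 * σ * vsq x - 47 / 1600 * σ * vsq x := by ring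
      _ ≤ vsq (Uᵀ *ᵥ y) - 7 / 250 * σ * vsq y := by
          rw [hiso]
          have : (7 : ℝ) / 250 ≤ 47 / 1600 := by norm_num
          nlinarith [vsq_nonneg x, hσpos.le]
      _ ≤ vsq (Uᵀ *ᵥ y) - y ⬝ᵥ (Δ *ᵥ y) := by linarith
      _ = y ⬝ᵥ ((W * Wᵀ) *ᵥ y) := by rw [hsplitW y, hUUq y]
      _ = vsq (Wᵀ *ᵥ y) := hWWq y
  -- opb for B = Vpᵀ W
  have hBt_op : opb (Wᵀ * Vp) (3 / 100 * σ) := by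
    refine ⟨by positivity, fun x => ?_⟩
    rw [← Matrix.mulVec_mulVec]
    set y := Vp *ᵥ x with hy
    have hiso : vsq y = vsq x := orth_iso hVp x
    have hXy : Xs *ᵥ y = 0 := by
      rw [hy, Matrix.mulVec_mulVec, hXVp, Matrix.zero_mulVec]
    have hUq : y ⬝ᵥ ((U * Uᵀ) *ᵥ y) ≤ σ / 1600 * vsq y := by
      rw [hsplitU y, hXy, dotProduct_zero, add_zero]
      exact le_trans (le_abs_self _) (hspec y)
    have hΔq : -(7 / 250 * σ * vsq y) ≤ y ⬝ᵥ (Δ *ᵥ y) := by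
      have h := quad_ge_neg_frob Δ y
      have : frobNorm Δ * vsq y ≤ 7 / 250 * σ * vsq y :=
        mul_le_mul_of_nonneg_right hfrobΔ (vsq_nonneg y)
      linarith
    calc vsq (Wᵀ *ᵥ y) = y ⬝ᵥ ((W * Wᵀ) *ᵥ y) := (hWWq y).symm
      _ = y ⬝ᵥ ((U * Uᵀ) *ᵥ y) - y ⬝ᵥ (Δ *ᵥ y) := hsplitW y
      _ ≤ σ / 1600 * vsq y + 7 / 250 * σ * vsq y := by linarith
      _ ≤ 3 / 100 * σ * vsq y := by nlinarith [vsq_nonneg y, hσpos.le]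
      _ = 3 / 100 * σ * vsq x := by rw [hiso]
  have hB_op : opb (Vpᵀ * W) (3 / 100 * σ) := by
    have h := opb_transpose hBt_op
    rwa [Matrix.transpose_mul, Matrix.transpose_transpose] at h
  -- invertibility of C and D
  have hCpos : (0:ℝ) < 1599 / 1600 * σ := by positivity
  have hDpos : (0:ℝ) < 97 / 100 * σ := by positivity
  have hdetC : IsUnit (Vsᵀ * U).det := det_isUnit_of_lower hCpos hC_low
  have hdetD : IsUnit (Vsᵀ * W).det := det_isUnit_of_lower hDpos hD_low
  have hCinv : opb (Vsᵀ * U)⁻¹ (1 / (1599 / 1600 * σ)) := opb_inv_of_lower hCpos hC_low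
  have hDinv : opb (Vsᵀ * W)⁻¹ (1 / (97 / 100 * σ)) := opb_inv_of_lower hDpos hD_low
  -- block identities
  have hCi : (Vsᵀ * U)⁻¹ * (Vsᵀ * U) = 1 := Matrix.nonsing_inv_mul _ hdetC
  have hM'eq : Vsᵀ * Δ * Vp = (Vsᵀ * U) * (Vpᵀ * U)ᵀ - (Vsᵀ * W) * (Vpᵀ * W)ᵀ := by
    rw [hΔdef]
    simp only [Matrix.mul_sub, Matrix.sub_mul, Matrix.transpose_mul,
      Matrix.transpose_transpose, Matrix.mul_assoc]
  have hSeq : Vsᵀ * Δ * Vs = (Vsᵀ * U) * (Vsᵀ * U)ᵀ - (Vsᵀ * W) * (Vsᵀ * W)ᵀ := by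
    rw [hΔdef]
    simp only [Matrix.mul_sub, Matrix.sub_mul, Matrix.transpose_mul,
      Matrix.transpose_transpose, Matrix.mul_assoc]
  have hNeq : Vpᵀ * Δ * Vp = (Vpᵀ * U) * (Vpᵀ * U)ᵀ - (Vpᵀ * W) * (Vpᵀ * W)ᵀ := by
    rw [hΔdef]
    simp only [Matrix.mul_sub, Matrix.sub_mul, Matrix.transpose_mul,
      Matrix.transpose_transpose, Matrix.mul_assoc]
  have hNid : Vpᵀ * Δ * Vp
      = (Vpᵀ * U) * (Vsᵀ * U)⁻¹ * (Vsᵀ * Δ * Vp)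
        + ((Vpᵀ * U) * (Vsᵀ * U)⁻¹ * (Vsᵀ * W) - Vpᵀ * W) * (Vpᵀ * W)ᵀ := by
    rw [hNeq, key_id1 (Vpᵀ * U) (Vpᵀ * W) (Vsᵀ * U) (Vsᵀ * W) ((Vsᵀ * U)⁻¹) hCi, ← hM'eq]
  have hdetDT : IsUnit ((Vsᵀ * W)ᵀ).det := by rwa [Matrix.det_transpose]
  have hFid : (Vpᵀ * U) * (Vsᵀ * U)⁻¹ * (Vsᵀ * W) - Vpᵀ * W
      = ((Vsᵀ * Δ * Vp)ᵀ - (Vpᵀ * U) * (Vsᵀ * U)⁻¹ * (Vsᵀ * Δ * Vs)) * ((Vsᵀ * W)ᵀ)⁻¹ := by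
    have hid2 := key_id2 (Vpᵀ * U) (Vpᵀ * W) (Vsᵀ * U) (Vsᵀ * W) ((Vsᵀ * U)⁻¹) hCi
    rw [← hM'eq, ← hSeq] at hid2
    have h := congrArg (fun M => M * ((Vsᵀ * W)ᵀ)⁻¹) hid2
    rw [Matrix.mul_assoc, Matrix.mul_nonsing_inv _ hdetDT, Matrix.mul_one] at h
    exact h
  -- norm chain
  have hACi : opb ((Vpᵀ * U) * (Vsᵀ * U)⁻¹) (1 / 1599 : ℝ) := by
    have h := opb_mul hA_op hCinv
    have hc : σ / 1600 * (1 / (1599 / 1600 * σ)) = 1 / 1599 := by field_simp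
    rwa [hc] at h
  have hM'f : frobNorm (Vsᵀ * Δ * Vp) ≤ m := by
    have h := frob_right_mul (orth_opb hVp) (Vsᵀ * Δ)
    rwa [Real.sqrt_one, one_mul] at h
  have hSf : frobNorm (Vsᵀ * Δ * Vs) ≤ m := by
    have h := frob_right_mul (orth_opb hVs) (Vsᵀ * Δ)
    rwa [Real.sqrt_one, one_mul] at h
  have hDinvT : opb ((((Vsᵀ * W)ᵀ)⁻¹)ᵀ) (1 / (97 / 100 * σ)) := by
    rw [Matrix.transpose_nonsing_inv, Matrix.transpose_transpose]
    exact hDinv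
  have hGf : frobNorm ((Vsᵀ * Δ * Vp)ᵀ - (Vpᵀ * U) * (Vsᵀ * U)⁻¹ * (Vsᵀ * Δ * Vs))
      ≤ m + Real.sqrt (1 / 1599) * m := by
    refine (frob_sub _ _).trans ?_
    have t1 : frobNorm ((Vsᵀ * Δ * Vp)ᵀ) ≤ m := by rw [frob_transpose]; exact hM'f
    have t2 : frobNorm ((Vpᵀ * U) * (Vsᵀ * U)⁻¹ * (Vsᵀ * Δ * Vs))
        ≤ Real.sqrt (1 / 1599) * m :=
      (frob_left_mul hACi _).trans (mul_le_mul_of_nonneg_left hSf (Real.sqrt_nonneg _))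
    linarith
  have hFf : frobNorm ((Vpᵀ * U) * (Vsᵀ * U)⁻¹ * (Vsᵀ * W) - Vpᵀ * W)
      ≤ Real.sqrt (1 / (97 / 100 * σ)) * (m + Real.sqrt (1 / 1599) * m) := by
    rw [hFid]
    exact (frob_right_mul hDinvT _).trans
      (mul_le_mul_of_nonneg_left hGf (Real.sqrt_nonneg _))
  have hBT : opb (((Vpᵀ * W)ᵀ)ᵀ) (3 / 100 * σ) := by
    rwa [Matrix.transpose_transpose]
  have hNf : frobNorm (Vpᵀ * Δ * Vp)
      ≤ Real.sqrt (1 / 1599) * m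
        + Real.sqrt (3 / 100 * σ)
          * (Real.sqrt (1 / (97 / 100 * σ)) * (m + Real.sqrt (1 / 1599) * m)) := by
    rw [hNid]
    refine (frob_add _ _).trans ?_
    have t1 : frobNorm ((Vpᵀ * U) * (Vsᵀ * U)⁻¹ * (Vsᵀ * Δ * Vp)) ≤ Real.sqrt (1 / 1599) * m :=
      (frob_left_mul hACi _).trans (mul_le_mul_of_nonneg_left hM'f (Real.sqrt_nonneg _))
    have t2 : frobNorm (((Vpᵀ * U) * (Vsᵀ * U)⁻¹ * (Vsᵀ * W) - Vpᵀ * W) * (Vpᵀ * W)ᵀ)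
        ≤ Real.sqrt (3 / 100 * σ)
          * (Real.sqrt (1 / (97 / 100 * σ)) * (m + Real.sqrt (1 / 1599) * m)) :=
      (frob_right_mul hBT _).trans (mul_le_mul_of_nonneg_left hFf (Real.sqrt_nonneg _))
    linarith
  -- numerics
  have hb1 : Real.sqrt (1 / 1599 : ℝ) ≤ 1 / 39 := by
    rw [show (1 / 39 : ℝ) = Real.sqrt ((1 / 39) ^ 2) from (Real.sqrt_sq (by norm_num)).symm]
    exact Real.sqrt_le_sqrt (by norm_num)
  have hb2 : Real.sqrt (3 / 97 : ℝ) ≤ 9 / 50 := by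
    rw [show (9 / 50 : ℝ) = Real.sqrt ((9 / 50) ^ 2) from (Real.sqrt_sq (by norm_num)).symm]
    exact Real.sqrt_le_sqrt (by norm_num)
  have hprod : Real.sqrt (3 / 100 * σ) * Real.sqrt (1 / (97 / 100 * σ))
      = Real.sqrt (3 / 97 : ℝ) := by
    rw [← Real.sqrt_mul (by positivity)]
    congr 1
    field_simp
  have part1 : frobNorm (Vpᵀ * Δ * Vp) ≤ 3 / 5 * m := by
    have hterm : Real.sqrt (3 / 100 * σ)
        * (Real.sqrt (1 / (97 / 100 * σ)) * (m + Real.sqrt (1 / 1599) * m))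
        = Real.sqrt (3 / 97) * (m + Real.sqrt (1 / 1599) * m) := by
      rw [← mul_assoc, hprod]
    rw [hterm] at hNf
    have hsm : Real.sqrt (1 / 1599) * m ≤ (1 / 39) * m :=
      mul_le_mul_of_nonneg_right hb1 hm0
    have hinner0 : 0 ≤ m + Real.sqrt (1 / 1599) * m :=
      add_nonneg hm0 (mul_nonneg (Real.sqrt_nonneg _) hm0)
    have hbig : Real.sqrt (3 / 97) * (m + Real.sqrt (1 / 1599) * m)
        ≤ (9 / 50) * (m + (1 / 39) * m) := by
      apply mul_le_mul hb2 (by linarith) hinner0 (by norm_num)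
    linarith
  -- part 2
  have hcomp := completeness hrd Vs Vp hVs hVp hVsVp
  have hPy1 := ssq_split_left hcomp Δ
  have hPy2 := ssq_split_right hcomp (Vpᵀ * Δ)
  have hPy3 := ssq_split_right hcomp (Vsᵀ * Δ)
  have htr : ssq (Vpᵀ * Δ * Vs) = ssq (Vsᵀ * Δ * Vp) := by
    have hT : (Vsᵀ * Δ * Vp)ᵀ = Vpᵀ * Δ * Vs := by
      rw [Matrix.transpose_mul, Matrix.transpose_mul, Matrix.transpose_transpose, hΔsym,
        ← Matrix.mul_assoc]
    rw [← hT, ssq_transpose]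
  have hm2 : ssq (Vsᵀ * Δ) = m ^ 2 := (frob_sq _).symm
  have hNssq : ssq (Vpᵀ * Δ * Vp) ≤ (3 / 5 * m) ^ 2 := by
    rw [← frob_sq]
    exact pow_le_pow_left₀ (frob_nonneg _) part1 2
  have hM'ssq : ssq (Vsᵀ * Δ * Vp) ≤ m ^ 2 := by
    have hnn := ssq_nonneg (Vsᵀ * Δ * Vs)
    rw [hm2] at hPy3
    linarith
  have hfinal2 : ssq Δ ≤ 9 * m ^ 2 := by
    rw [hm2] at hPy1
    rw [htr] at hPy2
    nlinarith [sq_nonneg m]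
  have part2 : frobNorm Δ ≤ 3 * m := by
    rw [frob_eq]
    calc Real.sqrt (ssq Δ) ≤ Real.sqrt (9 * m ^ 2) := Real.sqrt_le_sqrt hfinal2
      _ = 3 * m := by
          rw [show (9 : ℝ) * m ^ 2 = (3 * m) ^ 2 by ring, Real.sqrt_sq (by linarith)]
  exact ⟨part1, part2⟩
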